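/- Let $P_0,\dots,P_n$ be affinely independent in $\mathbb{R}^n$, and let $X=\sum_{i=0}^n \alpha_i P_i$ with all $\alpha_i > 0$, $\sum \alpha_i = 1$. Fix $1\le l<n$ and $t\in\{0,\dots,l\}$, and let $Q_t$ lie in $\mathrm{conv}\{P_j : j\le l, j\neq t\}$. Then $X\in\mathrm{conv}\{Q_t,P_t,P_{l+1},\dots,P_n\}$ if and only if $Q_t = \frac{1}{\sum_{j\le l, j\neq t}\alpha_j}\sum_{j\le l,\ j\neq t}\alpha_j P_j$. -/
import Mathlib

theorem cevian_membership_characterization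
    (n l : ℕ) (hl1 : 1 ≤ l) (hln : l < n)
    (P : Fin (n + 1) → EuclideanSpace ℝ (Fin n))
    (hP : AffineIndependent ℝ P)
    (X : EuclideanSpace ℝ (Fin n))
    (α : Fin (n + 1) → ℝ) (hαpos : ∀ i, 0 < α i) (hαsum : ∑ i, α i = 1)
    (hX : X = ∑ i, α i • P i)
    (t : Fin (n + 1)) (ht : (t : ℕ) ≤ l)
    (Qt : EuclideanSpace ℝ (Fin n))
    (hQt : Qt ∈ convexHull ℝ (P '' {j | (j : ℕ) ≤ l ∧ j ≠ t})) :
    X ∈ convexHull ℝ ({Qt, P t} ∪ P '' {m | l < (m : ℕ)}) ↔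
      Qt = (∑ j ∈ Finset.univ.filter (fun j : Fin (n + 1) => (j : ℕ) ≤ l ∧ j ≠ t), α j)⁻¹ •
        ∑ j ∈ Finset.univ.filter (fun j : Fin (n + 1) => (j : ℕ) ≤ l ∧ j ≠ t), α j • P j := by
  classical
  set S : Finset (Fin (n + 1)) :=
    Finset.univ.filter (fun j : Fin (n + 1) => (j : ℕ) ≤ l ∧ j ≠ t) with hS
  have hn2 : 2 ≤ n := by omega
  -- a witness element of S
  set j0 : Fin (n + 1) := if t = ⟨0, by omega⟩ then ⟨1, by omega⟩ else ⟨0, by omega⟩ with hj0def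
  have hj0pred : (j0 : ℕ) ≤ l ∧ j0 ≠ t := by
    rw [hj0def]
    split_ifs with h
    · refine ⟨by simpa using hl1, ?_⟩
      rw [h]
      simp [Fin.ext_iff]
    · exact ⟨by simp, fun hc => h hc.symm⟩
  have hj0 : j0 ∈ S := by simp [hS, hj0pred.1, hj0pred.2]
  set σ : ℝ := ∑ j ∈ S, α j with hσ
  have hσpos : 0 < σ := Finset.sum_pos (fun j _ => hαpos j) ⟨j0, hj0⟩
  have hPinj : Function.Injective P := hP.injective
  -- extract weights for Qt
  have himg : P '' {j | (j : ℕ) ≤ l ∧ j ≠ t} = ↑(S.image P) := by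
    ext x
    simp [hS]
  rw [himg, Finset.convexHull_eq] at hQt
  obtain ⟨W, hW0, hW1, hWc⟩ := hQt
  set β : Fin (n + 1) → ℝ := fun j => W (P j) with hβ
  have hinj' : ∀ x ∈ S, ∀ y ∈ S, P x = P y → x = y := fun x _ y _ h => hPinj h
  have hβ1 : ∑ j ∈ S, β j = 1 := by
    rw [← Finset.sum_image hinj']
    exact hW1
  have hQ : Qt = ∑ j ∈ S, β j • P j := by
    rw [Finset.centerMass_eq_of_sum_1 _ _ hW1] at hWc
    rw [← hWc, Finset.sum_image hinj']
    simp [hβ]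
  -- the family whose range is the target set
  set g : Fin (n + 1) → EuclideanSpace ℝ (Fin n) :=
    fun i => if (i : ℕ) ≤ l ∧ i ≠ t then Qt else P i with hg
  have hset : ({Qt, P t} ∪ P '' {m | l < (m : ℕ)}) = Set.range g := by
    ext x
    simp only [Set.mem_union, Set.mem_insert_iff, Set.mem_singleton_iff, Set.mem_image,
      Set.mem_setOf_eq, Set.mem_range, hg]
    constructor
    · rintro ((rfl | rfl) | ⟨m, hm, rfl⟩)
      · exact ⟨j0, if_pos hj0pred⟩
      · exact ⟨t, if_neg (by simp)⟩
      · exact ⟨m, if_neg (by omega)⟩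
    · rintro ⟨i, rfl⟩
      by_cases hi : (i : ℕ) ≤ l ∧ i ≠ t
      · left; left; rw [if_pos hi]
      · rw [if_neg hi]
        by_cases hit : i = t
        · subst hit; left; right; rfl
        · right; exact ⟨i, by omega, rfl⟩
  rw [hset, convexHull_range_eq_exists_affineCombination]
  constructor
  · rintro ⟨s, w, hw0, hw1, hwX⟩
    rw [Finset.affineCombination_eq_linear_combination s g w hw1] at hwX
    set w' : Fin (n + 1) → ℝ := fun i => if i ∈ s then w i else 0 with hw'
    have hw'1 : ∑ i, w' i = 1 := by
      rw [hw', Finset.sum_ite_mem, Finset.univ_inter, hw1]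
    have hw'X : ∑ i, w' i • g i = X := by
      rw [← hwX]
      have e : ∑ i, w' i • g i = ∑ i, (if i ∈ s then w i • g i else 0) := by
        refine Finset.sum_congr rfl fun i _ => ?_
        by_cases h : i ∈ s <;> simp [hw', h]
      rw [e, Finset.sum_ite_mem, Finset.univ_inter]
    set a : ℝ := ∑ j ∈ S, w' j with ha
    set γ : Fin (n + 1) → ℝ := fun i => if (i : ℕ) ≤ l ∧ i ≠ t then a * β i else w' i with hγ
    have hsplit : ∀ f : Fin (n + 1) → EuclideanSpace ℝ (Fin n),
        ∑ i, f i = ∑ i ∈ S, f i +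
          ∑ i ∈ Finset.univ.filter (fun i : Fin (n+1) => ¬((i : ℕ) ≤ l ∧ i ≠ t)), f i := by
      intro f
      rw [hS, Finset.sum_filter_add_sum_filter_not]
    have hsplitR : ∀ f : Fin (n + 1) → ℝ,
        ∑ i, f i = ∑ i ∈ S, f i +
          ∑ i ∈ Finset.univ.filter (fun i : Fin (n+1) => ¬((i : ℕ) ≤ l ∧ i ≠ t)), f i := by
      intro f
      rw [hS, Finset.sum_filter_add_sum_filter_not]
    have hγ1 : ∑ i, γ i = 1 := by
      rw [hsplitR γ]
      have e1 : ∑ i ∈ S, γ i = a := by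
        rw [Finset.sum_congr rfl (fun i hi => ?_), ← Finset.mul_sum, hβ1, mul_one]
        have := Finset.mem_filter.mp (hS ▸ hi)
        exact if_pos this.2
      have e2 : ∑ i ∈ Finset.univ.filter (fun i : Fin (n+1) => ¬((i : ℕ) ≤ l ∧ i ≠ t)), γ i
          = ∑ i ∈ Finset.univ.filter (fun i : Fin (n+1) => ¬((i : ℕ) ≤ l ∧ i ≠ t)), w' i := by
        refine Finset.sum_congr rfl (fun i hi => ?_)
        exact if_neg (Finset.mem_filter.mp hi).2
      rw [e1, e2]
      have := hsplitR w'
      rw [hw'1, ← ha] at this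
      linarith [this]
    have hγX : ∑ i, γ i • P i = X := by
      rw [← hw'X, hsplit (fun i => γ i • P i), hsplit (fun i => w' i • g i)]
      congr 1
      · have e1 : ∑ i ∈ S, γ i • P i = a • Qt := by
          rw [hQ, Finset.smul_sum]
          refine Finset.sum_congr rfl (fun i hi => ?_)
          have hpred := (Finset.mem_filter.mp (hS ▸ hi)).2
          rw [hγ]
          simp only [if_pos hpred]
          rw [mul_smul]
        have e2 : ∑ i ∈ S, w' i • g i = a • Qt := by
          have e0 : ∀ i ∈ S, w' i • g i = w' i • Qt := by
            intro i hi
            have hpred := (Finset.mem_filter.mp (hS ▸ hi)).2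
            rw [hg]
            simp only [if_pos hpred]
          rw [Finset.sum_congr rfl e0, ← Finset.sum_smul]
        rw [e1, e2]
      · refine Finset.sum_congr rfl (fun i hi => ?_)
        have hpred := (Finset.mem_filter.mp hi).2
        rw [hγ, hg]
        simp only [if_neg hpred]
    -- uniqueness of barycentric coordinates
    have huniq : γ = α := by
      have h1 : Finset.univ.affineCombination ℝ P γ = Finset.univ.affineCombination ℝ P α := by
        rw [Finset.affineCombination_eq_linear_combination _ _ _ hγ1,
          Finset.affineCombination_eq_linear_combination _ _ _ hαsum, hγX, hX]
      exact (affineIndependent_iff_eq_of_fintype_affineCombination_eq ℝ P).mp hP γ α hγ1 hαsum h1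
    have hkey : ∀ j ∈ S, a * β j = α j := by
      intro j hj
      have hpred := (Finset.mem_filter.mp (hS ▸ hj)).2
      exact (if_pos hpred : γ j = a * β j).symm.trans (congrFun huniq j)
    have haσ : a = σ := by
      rw [hσ, ← Finset.sum_congr rfl hkey, ← Finset.mul_sum, hβ1, mul_one]
    rw [hQ, Finset.smul_sum]
    refine Finset.sum_congr rfl (fun j hj => ?_)
    rw [smul_smul]
    congr 1
    have := hkey j hj
    rw [haσ] at this
    field_simp
    linarith [this]
  · intro hQeq
    refine ⟨Finset.univ, α, fun i _ => (hαpos i).le, hαsum, ?_⟩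
    rw [Finset.affineCombination_eq_linear_combination _ _ _ hαsum, hX]
    rw [hS] at hQeq
    have e1 : ∑ i ∈ S, α i • g i = ∑ i ∈ S, α i • P i := by
      have e0 : ∀ i ∈ S, α i • g i = α i • Qt := by
        intro i hi
        have hpred := (Finset.mem_filter.mp (hS ▸ hi)).2
        rw [hg]
        simp only [if_pos hpred]
      rw [Finset.sum_congr rfl e0, ← Finset.sum_smul]
      rw [hQeq, smul_smul, ← hσ, mul_inv_cancel₀ hσpos.ne', one_smul]
    calc ∑ i, α i • g i
        = ∑ i ∈ S, α i • g i +
          ∑ i ∈ Finset.univ.filter (fun i : Fin (n+1) => ¬((i : ℕ) ≤ l ∧ i ≠ t)), α i • g i := by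
          rw [hS, Finset.sum_filter_add_sum_filter_not]
      _ = ∑ i ∈ S, α i • P i +
          ∑ i ∈ Finset.univ.filter (fun i : Fin (n+1) => ¬((i : ℕ) ≤ l ∧ i ≠ t)), α i • P i := by
          rw [e1]
          congr 1
          refine Finset.sum_congr rfl (fun i hi => ?_)
          rw [hg]; simp only [if_neg (Finset.mem_filter.mp hi).2]
      _ = ∑ i, α i • P i := by rw [hS, Finset.sum_filter_add_sum_filter_not]
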